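/- The exterior 3-form ω = θ^1∧θ^2∧θ^6 + θ^3∧θ^1∧θ^5 + θ^2∧θ^3∧θ^4 on K^6 is not 3-regular: there exist M, N ∈ End(K^6), not scalar multiples of the identity, with ω(M X, Y, Z) = ω(X, N Y, Z) for all X, Y, Z. -/

import Mathlib

/-- The exterior 3-form `ω = θ¹∧θ²∧θ⁶ + θ³∧θ¹∧θ⁵ + θ²∧θ³∧θ⁴` on `K⁶`. -/
def omegaE (K : Type*) [Field K] (X Y Z : Fin 6 → K) : K :=
  Matrix.det !![X 0, X 1, X 5; Y 0, Y 1, Y 5; Z 0, Z 1, Z 5] +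
    Matrix.det !![X 2, X 0, X 4; Y 2, Y 0, Y 4; Z 2, Z 0, Z 4] +
    Matrix.det !![X 1, X 2, X 3; Y 1, Y 2, Y 3; Z 1, Z 2, Z 3]

/-- `ω` is not 3-regular: there are `M, N`, neither a scalar multiple of the identity,
with `ω(MX, Y, Z) = ω(X, NY, Z)` for all `X, Y, Z`. -/
theorem stmt_12 {K : Type*} [Field K] :
    ∃ M N : Matrix (Fin 6) (Fin 6) K,
      (∀ X Y Z : Fin 6 → K, omegaE K (M.mulVec X) Y Z = omegaE K X (N.mulVec Y) Z) ∧
      (∀ c : K, M ≠ c • (1 : Matrix (Fin 6) (Fin 6) K)) ∧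
      (∀ c : K, N ≠ c • (1 : Matrix (Fin 6) (Fin 6) K)) := by
  set P : Matrix (Fin 6) (Fin 6) K :=
    Matrix.of (fun i j => if (i : ℕ) = (j : ℕ) + 3 then (1 : K) else 0) with hP
  have hns : ∀ c : K, P ≠ c • (1 : Matrix (Fin 6) (Fin 6) K) := by
    intro c h
    have := congrFun (congrFun h 3) 0
    simp [hP, Matrix.one_apply, show ((0:Fin 6):ℕ)=0 from rfl, show ((1:Fin 6):ℕ)=1 from rfl, show ((2:Fin 6):ℕ)=2 from rfl, show ((3:Fin 6):ℕ)=3 from rfl, show ((4:Fin 6):ℕ)=4 from rfl, show ((5:Fin 6):ℕ)=5 from rfl] at this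
  refine ⟨P, P, ?_, hns, hns⟩
  intro X Y Z
  simp only [omegaE, Matrix.det_fin_three, Matrix.mulVec, dotProduct,
    Fin.sum_univ_six, hP, Matrix.of_apply, Matrix.cons_val', Matrix.cons_val_zero,
    Matrix.cons_val_one, Matrix.cons_val_two, Matrix.tail_cons, Matrix.head_cons, Matrix.empty_val', Matrix.cons_val_fin_one,
    Matrix.head_fin_const, show ((0:Fin 6):ℕ)=0 from rfl, show ((1:Fin 6):ℕ)=1 from rfl, show ((2:Fin 6):ℕ)=2 from rfl, show ((3:Fin 6):ℕ)=3 from rfl, show ((4:Fin 6):ℕ)=4 from rfl, show ((5:Fin 6):ℕ)=5 from rfl]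
  norm_num
  ring
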